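/- arXiv:1706.00627 — 2 statements merged into one kernel-verified Lean document; each statement's English description precedes it below -/
import Mathlib

section
/- Fix n ∈ ℕ. The sequence of functions u ↦ ‖u‖_m := sup{ ‖(φ^v)_m(u)‖_m : (E, v) a proper couple } on M_m(M_n), m ∈ ℕ, is a matrix-norm on M_n: each ‖·‖_m is a norm on M_m(M_n) (in particular ‖u‖_m > 0 for u ≠ 0), and the sequence satisfies Axiom 1 (‖u ⊕ 0‖_{m+k} = ‖u‖_m) and Axiom 2 (‖Su‖_m ≤ ‖S‖_o‖u‖_m and ‖uS‖_m ≤ ‖u‖_m‖S‖_o for scalar matrices S ∈ M_m). -/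
open scoped BigOperators
open Matrix

noncomputable section

/-- Block-diagonal sum `u ⊕ w` of two square matrices with entries in `E`. -/
def MatDSum {E : Type*} [Zero E] {m k : ℕ}
    (u : Matrix (Fin m) (Fin m) E) (w : Matrix (Fin k) (Fin k) E) :
    Matrix (Fin (m + k)) (Fin (m + k)) E :=
  Matrix.reindex finSumFinEquiv finSumFinEquiv (Matrix.fromBlocks u 0 0 w)

/-- Left action `S·u` of a scalar matrix on an `E`-valued matrix. -/
def scalLeft {E : Type*} [AddCommMonoid E] [Module ℂ E] {m : ℕ}
    (S : Matrix (Fin m) (Fin m) ℂ) (u : Matrix (Fin m) (Fin m) E) :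
    Matrix (Fin m) (Fin m) E :=
  Matrix.of fun i j => ∑ k, S i k • u k j

/-- Right action `u·S` of a scalar matrix on an `E`-valued matrix. -/
def scalRight {E : Type*} [AddCommMonoid E] [Module ℂ E] {m : ℕ}
    (u : Matrix (Fin m) (Fin m) E) (S : Matrix (Fin m) (Fin m) ℂ) :
    Matrix (Fin m) (Fin m) E :=
  Matrix.of fun i j => ∑ k, S k j • u i k

/-- The operator norm `‖S‖_o` of a complex scalar matrix, i.e. its norm as an
operator on the euclidean (Hilbert) space `ℂⁿ`. -/
noncomputable def opNorm {m : ℕ} (S : Matrix (Fin m) (Fin m) ℂ) : ℝ :=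
  ‖LinearMap.toContinuousLinearMap (Matrix.toEuclideanLin S)‖

/-- The `m`-th amplification of a map `φ : E → F`: apply `φ` entrywise. -/
def matAmpl {E F : Type*} (φ : E → F) {m : ℕ} (u : Matrix (Fin m) (Fin m) E) :
    Matrix (Fin m) (Fin m) F :=
  Matrix.of fun i j => φ (u i j)

/-- The operator `φ^v : M_n → E`, `(λ_{ij}) ↦ Σ_{i,j} λ_{ji} • x_{ij}`, associated with
`v = (x_{ij}) ∈ M_n(E)`. -/
def matPhi {E : Type*} [AddCommMonoid E] [Module ℂ E] {n : ℕ}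
    (v : Matrix (Fin n) (Fin n) E) (a : Matrix (Fin n) (Fin n) ℂ) : E :=
  ∑ i, ∑ j, a j i • v i j

/-- `ν` is a matrix-norm on the complex vector space `E`: each `ν m` is a norm on
`M_m(E)`, and Axioms 1 and 2 of Effros/Ruan hold. -/
def IsMatrixNorm {E : Type} [AddCommGroup E] [Module ℂ E]
    (ν : ∀ m : ℕ, Matrix (Fin m) (Fin m) E → ℝ) : Prop :=
  (∀ (m : ℕ) (u v : Matrix (Fin m) (Fin m) E), ν m (u + v) ≤ ν m u + ν m v) ∧
  (∀ (m : ℕ) (c : ℂ) (u : Matrix (Fin m) (Fin m) E), ν m (c • u) = ‖c‖ * ν m u) ∧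
  (∀ (m : ℕ) (u : Matrix (Fin m) (Fin m) E), ν m u = 0 ↔ u = 0) ∧
  (∀ (m k : ℕ) (u : Matrix (Fin m) (Fin m) E),
      ν (m + k) (MatDSum u (0 : Matrix (Fin k) (Fin k) E)) = ν m u) ∧
  (∀ (m : ℕ) (S : Matrix (Fin m) (Fin m) ℂ) (u : Matrix (Fin m) (Fin m) E),
      ν m (scalLeft S u) ≤ opNorm S * ν m u) ∧
  (∀ (m : ℕ) (u : Matrix (Fin m) (Fin m) E) (S : Matrix (Fin m) (Fin m) ℂ),
      ν m (scalRight u S) ≤ ν m u * opNorm S)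

/-- The set of values `‖(φ^v)_m(u)‖_m` over all proper couples `(E, v)`, i.e. over all
matricially normed spaces `E` and all `v` in the closed unit ball of `M_n(E)`. -/
def hatNormSet (n : ℕ) {m : ℕ}
    (u : Matrix (Fin m) (Fin m) (Matrix (Fin n) (Fin n) ℂ)) : Set ℝ :=
  { r | ∃ (E : Type) (_ : AddCommGroup E) (_ : Module ℂ E)
        (ν : ∀ m' : ℕ, Matrix (Fin m') (Fin m') E → ℝ),
        IsMatrixNorm ν ∧
        ∃ v : Matrix (Fin n) (Fin n) E, ν n v ≤ 1 ∧ r = ν m (matAmpl (matPhi v) u) }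

/-- The matrix-norm of the matricially normed space `M̂_n`:
`‖u‖_m = sup { ‖(φ^v)_m(u)‖_m : (E, v) a proper couple }`. -/
noncomputable def hatNorm (n : ℕ) {m : ℕ}
    (u : Matrix (Fin m) (Fin m) (Matrix (Fin n) (Fin n) ℂ)) : ℝ :=
  sSup (hatNormSet n u)

lemma opNorm_nonneg {m : ℕ} (S : Matrix (Fin m) (Fin m) ℂ) : 0 ≤ opNorm S :=
  norm_nonneg _

lemma opNorm_mulVec_le {m : ℕ} (S : Matrix (Fin m) (Fin m) ℂ) (x : EuclideanSpace ℂ (Fin m)) :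
    ‖Matrix.toEuclideanLin S x‖ ≤ opNorm S * ‖x‖ := by
  have h := (LinearMap.toContinuousLinearMap (Matrix.toEuclideanLin S)).le_opNorm x
  have h2 : (LinearMap.toContinuousLinearMap (Matrix.toEuclideanLin S)) x
      = Matrix.toEuclideanLin S x := rfl
  rw [h2] at h
  exact h

lemma opNorm_conjTranspose {m : ℕ} (S : Matrix (Fin m) (Fin m) ℂ) :
    opNorm Sᴴ = opNorm S := by
  rw [opNorm, Matrix.toEuclideanLin_conjTranspose_eq_adjoint,
    LinearMap.adjoint_toContinuousLinearMap]
  exact ContinuousLinearMap.adjoint.norm_map _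

def evec {m : ℕ} (x : Fin m → ℂ) : EuclideanSpace ℂ (Fin m) :=
  (WithLp.equiv 2 (Fin m → ℂ)).symm x

lemma evec_norm_sq {m : ℕ} (x : Fin m → ℂ) : ‖evec x‖ ^ 2 = ∑ i, ‖x i‖ ^ 2 := by
  rw [EuclideanSpace.norm_eq, Real.sq_sqrt (by positivity)]
  rfl

lemma enorm_mulVec_le {m : ℕ} (S : Matrix (Fin m) (Fin m) ℂ) (x : Fin m → ℂ) :
    ‖evec (S *ᵥ x)‖ ≤ opNorm S * ‖evec x‖ := by
  have h := (LinearMap.toContinuousLinearMap (Matrix.toEuclideanLin S)).le_opNorm (evec x)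
  have h2 : (LinearMap.toContinuousLinearMap (Matrix.toEuclideanLin S)) (evec x)
      = evec (S *ᵥ x) := by
    show Matrix.toEuclideanLin S (evec x) = _
    rw [evec, WithLp.equiv_symm_apply, Matrix.toEuclideanLin_apply_piLp_toLp]
    rfl
  rw [h2] at h
  exact h

lemma opNorm_stdBasis_le {m : ℕ} (p q : Fin m) :
    opNorm (Matrix.single p q (1 : ℂ)) ≤ 1 := by
  apply ContinuousLinearMap.opNorm_le_bound _ zero_le_one
  intro x
  rw [one_mul]
  have h2 : (LinearMap.toContinuousLinearMap
      (Matrix.toEuclideanLin (Matrix.single p q (1 : ℂ)))) x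
      = evec (Matrix.single p q (1 : ℂ) *ᵥ (WithLp.equiv 2 (Fin m → ℂ) x)) := by
    show Matrix.toEuclideanLin _ x = _
    rw [Matrix.toEuclideanLin_apply]
    rfl
  rw [h2]
  set y := WithLp.equiv 2 (Fin m → ℂ) x with hy
  have hmv : ∀ i, (Matrix.single p q (1 : ℂ) *ᵥ y) i
      = if i = p then y q else 0 := by
    intro i
    simp [Matrix.mulVec, dotProduct, Matrix.single, ite_and,
      Finset.sum_ite_eq, eq_comm]
  have hnormx : ‖x‖ ^ 2 = ∑ i, ‖y i‖ ^ 2 := by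
    rw [EuclideanSpace.norm_eq, Real.sq_sqrt (by positivity)]
    rfl
  have key : ‖evec (Matrix.single p q (1 : ℂ) *ᵥ y)‖ ^ 2 ≤ ‖x‖ ^ 2 := by
    rw [evec_norm_sq, hnormx]
    calc ∑ i, ‖(Matrix.single p q (1 : ℂ) *ᵥ y) i‖ ^ 2
        = ∑ i, (if i = p then ‖y q‖ ^ 2 else 0) := by
          apply Finset.sum_congr rfl; intro i _; rw [hmv i]; split_ifs <;> simp
      _ = ‖y q‖ ^ 2 := by simp
      _ ≤ ∑ i, ‖y i‖ ^ 2 := Finset.single_le_sum (f := fun i => ‖y i‖ ^ 2)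
          (fun i _ => by positivity) (Finset.mem_univ q)
  exact (pow_le_pow_iff_left₀ (norm_nonneg _) (norm_nonneg _) two_ne_zero).mp key

lemma MatDSum_apply {E : Type*} [Zero E] {m k : ℕ}
    (u : Matrix (Fin m) (Fin m) E) (w : Matrix (Fin k) (Fin k) E) (p q : Fin (m + k)) :
    MatDSum u w p q
      = Matrix.fromBlocks u 0 0 w (finSumFinEquiv.symm p) (finSumFinEquiv.symm q) := by
  simp [MatDSum]

noncomputable def frobNu (m : ℕ) (u : Matrix (Fin m) (Fin m) ℂ) : ℝ :=
  ‖(WithLp.equiv 2 (Fin m × Fin m → ℂ)).symm (fun p => u p.1 p.2)‖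

lemma frobNu_nonneg (m : ℕ) (u : Matrix (Fin m) (Fin m) ℂ) : 0 ≤ frobNu m u :=
  norm_nonneg _

lemma frobNu_sq (m : ℕ) (u : Matrix (Fin m) (Fin m) ℂ) :
    frobNu m u ^ 2 = ∑ i, ∑ j, ‖u i j‖ ^ 2 := by
  rw [frobNu, EuclideanSpace.norm_eq, Real.sq_sqrt (by positivity)]
  rw [show (fun i : Fin m × Fin m => ‖(WithLp.equiv 2 (Fin m × Fin m → ℂ)).symm
      (fun p => u p.1 p.2) i‖ ^ 2) = fun i => ‖u i.1 i.2‖ ^ 2 from rfl,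
    Fintype.sum_prod_type]

lemma frobNu_eq_sqrt (m : ℕ) (u : Matrix (Fin m) (Fin m) ℂ) :
    frobNu m u = Real.sqrt (∑ i, ∑ j, ‖u i j‖ ^ 2) := by
  rw [← frobNu_sq, Real.sqrt_sq (frobNu_nonneg m u)]

lemma frobNu_add_le (m : ℕ) (u v : Matrix (Fin m) (Fin m) ℂ) :
    frobNu m (u + v) ≤ frobNu m u + frobNu m v := by
  have : (WithLp.equiv 2 (Fin m × Fin m → ℂ)).symm (fun p => (u + v) p.1 p.2)
      = (WithLp.equiv 2 (Fin m × Fin m → ℂ)).symm (fun p => u p.1 p.2)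
        + (WithLp.equiv 2 (Fin m × Fin m → ℂ)).symm (fun p => v p.1 p.2) := rfl
  rw [frobNu, this]
  exact norm_add_le _ _

lemma frobNu_smul (m : ℕ) (c : ℂ) (u : Matrix (Fin m) (Fin m) ℂ) :
    frobNu m (c • u) = ‖c‖ * frobNu m u := by
  have : (WithLp.equiv 2 (Fin m × Fin m → ℂ)).symm (fun p => (c • u) p.1 p.2)
      = c • (WithLp.equiv 2 (Fin m × Fin m → ℂ)).symm (fun p => u p.1 p.2) := rfl
  rw [frobNu, this, norm_smul, frobNu]

lemma frobNu_eq_zero (m : ℕ) (u : Matrix (Fin m) (Fin m) ℂ) :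
    frobNu m u = 0 ↔ u = 0 := by
  rw [frobNu, norm_eq_zero]
  constructor
  · intro h
    ext i j
    have := congrFun (((WithLp.equiv 2 (Fin m × Fin m → ℂ)).symm.injective)
      (by simpa using h) : (fun p : Fin m × Fin m => u p.1 p.2) = 0) (i, j)
    simpa using this
  · rintro rfl; rfl

lemma frobNu_dsum (m k : ℕ) (u : Matrix (Fin m) (Fin m) ℂ) :
    frobNu (m + k) (MatDSum u (0 : Matrix (Fin k) (Fin k) ℂ)) = frobNu m u := by
  rw [frobNu_eq_sqrt, frobNu_eq_sqrt]
  congr 1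
  have hsum : ∀ f : Fin (m + k) → ℝ, ∑ p, f p = ∑ s : Fin m ⊕ Fin k, f (finSumFinEquiv s) :=
    fun f => (Fintype.sum_equiv finSumFinEquiv _ f (fun s => rfl)).symm
  rw [hsum]
  simp only [Fintype.sum_sum_type]
  have inner : ∀ s : Fin m ⊕ Fin k,
      (∑ q, ‖MatDSum u (0 : Matrix (Fin k) (Fin k) ℂ) (finSumFinEquiv s) q‖ ^ 2)
      = ∑ t : Fin m ⊕ Fin k,
        ‖Matrix.fromBlocks u 0 0 (0 : Matrix (Fin k) (Fin k) ℂ) s t‖ ^ 2 := by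
    intro s
    rw [hsum]
    apply Finset.sum_congr rfl
    intro t _
    rw [MatDSum_apply]
    simp
  simp only [inner, Fintype.sum_sum_type]
  simp [Matrix.fromBlocks]

lemma sq_le_of_nonneg {a b : ℝ} (ha : 0 ≤ a) (hb : 0 ≤ b) (h : a ^ 2 ≤ b ^ 2) : a ≤ b :=
  (pow_le_pow_iff_left₀ ha hb two_ne_zero).mp h

lemma enorm_star {m : ℕ} (x : Fin m → ℂ) :
    ‖evec (fun i => (starRingEnd ℂ) (x i))‖ = ‖evec x‖ := by
  have h : ‖evec (fun i => (starRingEnd ℂ) (x i))‖ ^ 2 = ‖evec x‖ ^ 2 := by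
    rw [evec_norm_sq, evec_norm_sq]
    simp
  exact sq_le_of_nonneg (norm_nonneg _) (norm_nonneg _) h.le |>.antisymm
    (sq_le_of_nonneg (norm_nonneg _) (norm_nonneg _) h.ge)

lemma enorm_vecMul_le {m : ℕ} (x : Fin m → ℂ) (S : Matrix (Fin m) (Fin m) ℂ) :
    ‖evec (x ᵥ* S)‖ ≤ opNorm S * ‖evec x‖ := by
  have h1 : x ᵥ* S = fun j => (starRingEnd ℂ) ((Sᴴ *ᵥ fun i => (starRingEnd ℂ) (x i)) j) := by
    funext j
    simp [Matrix.vecMul, Matrix.mulVec, dotProduct, Matrix.conjTranspose_apply,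
      map_sum, mul_comm]
  rw [h1, enorm_star]
  calc ‖evec (Sᴴ *ᵥ fun i => (starRingEnd ℂ) (x i))‖
      ≤ opNorm Sᴴ * ‖evec (fun i => (starRingEnd ℂ) (x i))‖ := enorm_mulVec_le _ _
    _ = opNorm S * ‖evec x‖ := by rw [opNorm_conjTranspose, enorm_star]

lemma frobNu_scalLeft (m : ℕ) (S : Matrix (Fin m) (Fin m) ℂ) (u : Matrix (Fin m) (Fin m) ℂ) :
    frobNu m (scalLeft S u) ≤ opNorm S * frobNu m u := by
  apply sq_le_of_nonneg (frobNu_nonneg _ _) (mul_nonneg (opNorm_nonneg _) (frobNu_nonneg _ _))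
  rw [mul_pow, frobNu_sq, frobNu_sq, Finset.sum_comm]
  calc ∑ j, ∑ i, ‖scalLeft S u i j‖ ^ 2
      = ∑ j, ‖evec (S *ᵥ fun k => u k j)‖ ^ 2 := by
        refine Finset.sum_congr rfl fun j _ => ?_
        rw [evec_norm_sq]
        refine Finset.sum_congr rfl fun i _ => ?_
        have : scalLeft S u i j = (S *ᵥ fun k => u k j) i := by
          simp [scalLeft, Matrix.mulVec, dotProduct, smul_eq_mul]
        rw [this]
    _ ≤ ∑ j, (opNorm S * ‖evec (fun k => u k j)‖) ^ 2 := by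
        refine Finset.sum_le_sum fun j _ => ?_
        exact pow_le_pow_left₀ (norm_nonneg _) (enorm_mulVec_le S _) 2
    _ = opNorm S ^ 2 * ∑ j, ∑ i, ‖u i j‖ ^ 2 := by
        rw [Finset.mul_sum]
        refine Finset.sum_congr rfl fun j _ => ?_
        rw [mul_pow, evec_norm_sq]
    _ = opNorm S ^ 2 * ∑ i, ∑ j, ‖u i j‖ ^ 2 := by rw [Finset.sum_comm]

lemma frobNu_scalRight (m : ℕ) (u : Matrix (Fin m) (Fin m) ℂ) (S : Matrix (Fin m) (Fin m) ℂ) :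
    frobNu m (scalRight u S) ≤ frobNu m u * opNorm S := by
  rw [mul_comm]
  apply sq_le_of_nonneg (frobNu_nonneg _ _) (mul_nonneg (opNorm_nonneg _) (frobNu_nonneg _ _))
  rw [mul_pow, frobNu_sq, frobNu_sq]
  calc ∑ i, ∑ j, ‖scalRight u S i j‖ ^ 2
      = ∑ i, ‖evec ((fun k => u i k) ᵥ* S)‖ ^ 2 := by
        refine Finset.sum_congr rfl fun i _ => ?_
        rw [evec_norm_sq]
        refine Finset.sum_congr rfl fun j _ => ?_
        have : scalRight u S i j = ((fun k => u i k) ᵥ* S) j := by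
          simp [scalRight, Matrix.vecMul, dotProduct, smul_eq_mul, mul_comm]
        rw [this]
    _ ≤ ∑ i, (opNorm S * ‖evec (fun k => u i k)‖) ^ 2 := by
        refine Finset.sum_le_sum fun i _ => ?_
        exact pow_le_pow_left₀ (norm_nonneg _) (enorm_vecMul_le _ S) 2
    _ = opNorm S ^ 2 * ∑ i, ∑ j, ‖u i j‖ ^ 2 := by
        rw [Finset.mul_sum]
        refine Finset.sum_congr rfl fun i _ => ?_
        rw [mul_pow, evec_norm_sq]


section General
variable {E : Type} [AddCommGroup E] [Module ℂ E]
variable {ν : ∀ m : ℕ, Matrix (Fin m) (Fin m) E → ℝ} (hν : IsMatrixNorm ν)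
include hν
set_option linter.unusedSectionVars false

lemma nu_zero (m : ℕ) : ν m 0 = 0 := (hν.2.2.1 m 0).2 rfl

lemma nu_neg (m : ℕ) (u : Matrix (Fin m) (Fin m) E) : ν m (-u) = ν m u := by
  have := hν.2.1 m (-1) u
  simpa using this

lemma nu_nonneg (m : ℕ) (u : Matrix (Fin m) (Fin m) E) : 0 ≤ ν m u := by
  have h0 : ν m (u + -u) = 0 := by rw [add_neg_cancel]; exact nu_zero hν m
  have h1 := hν.1 m u (-u)
  rw [h0, nu_neg hν] at h1
  linarith

lemma nu_sum_le {ι : Type*} (m : ℕ) (s : Finset ι) (f : ι → Matrix (Fin m) (Fin m) E) :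
    ν m (∑ i ∈ s, f i) ≤ ∑ i ∈ s, ν m (f i) := by
  classical
  induction s using Finset.induction_on with
  | empty => simp [nu_zero hν]
  | insert a s hx ih =>
    rw [Finset.sum_insert hx, Finset.sum_insert hx]
    exact le_trans (hν.1 m _ _) (add_le_add_right ih _)

lemma nu_cast {a b : ℕ} (h : a = b) (M : Matrix (Fin a) (Fin a) E) :
    ν b (Matrix.reindex (finCongr h) (finCongr h) M) = ν a M := by
  subst h
  simp

lemma nu_std00 (m' : ℕ) (x : E) :
    ν (m' + 1) (Matrix.single 0 0 x) = ν 1 (Matrix.of fun _ _ => x) := by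
  have h : 1 + m' = m' + 1 := Nat.add_comm 1 m'
  have key : Matrix.reindex (finCongr h) (finCongr h)
      (MatDSum (Matrix.of fun _ _ => x) (0 : Matrix (Fin m') (Fin m') E))
      = Matrix.single (0 : Fin (m' + 1)) 0 x := by
    ext p q
    rw [Matrix.reindex_apply, Matrix.submatrix_apply]
    rw [show (MatDSum (Matrix.of fun _ _ => x) (0 : Matrix (Fin m') (Fin m') E))
        ((finCongr h).symm p) ((finCongr h).symm q)
        = Matrix.fromBlocks (Matrix.of fun _ _ => x) 0 0 (0 : Matrix (Fin m') (Fin m') E)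
          (finSumFinEquiv.symm ((finCongr h).symm p))
          (finSumFinEquiv.symm ((finCongr h).symm q)) from by
      simp [MatDSum]]
    have hsymm : ∀ r : Fin (m' + 1), finSumFinEquiv.symm ((finCongr h).symm r)
        = if hr : (r : ℕ) = 0 then Sum.inl 0 else Sum.inr ⟨(r : ℕ) - 1, by omega⟩ := by
      intro r
      split_ifs with hr
      · have : (finCongr h).symm r = Fin.castAdd m' (0 : Fin 1) := by
          apply Fin.ext; simp [hr]
        rw [this, finSumFinEquiv_symm_apply_castAdd]
      · have : (finCongr h).symm r = Fin.natAdd 1 ⟨(r : ℕ) - 1, by omega⟩ := by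
          apply Fin.ext; simp; omega
        rw [this, finSumFinEquiv_symm_apply_natAdd]
    rw [hsymm p, hsymm q]
    by_cases hp : (p : ℕ) = 0 <;> by_cases hq : (q : ℕ) = 0 <;>
      simp [hp, hq, Matrix.single, Fin.ext_iff] <;>
      (try split_ifs with hh) <;> simp_all <;> (intro h0; exfalso; apply_assumption; exact Fin.ext h0.symm)
  rw [← key, nu_cast hν h, hν.2.2.2.1 1 m' (Matrix.of fun _ _ => x)]

lemma nu_std_le {m' : ℕ} (k l : Fin (m' + 1)) (x : E) :
    ν (m' + 1) (Matrix.single k l x) ≤ ν 1 (Matrix.of fun _ _ => x) := by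
  have key : Matrix.single k l x
      = scalLeft (Matrix.single k 0 (1 : ℂ))
          (scalRight (Matrix.single (0 : Fin (m' + 1)) 0 x)
            (Matrix.single (0 : Fin (m' + 1)) l (1 : ℂ))) := by
    ext p q
    simp only [scalLeft, scalRight, Matrix.of_apply, Matrix.single, ite_and,
      Finset.smul_sum]
    rw [Finset.sum_comm]
    simp [Finset.sum_ite_eq, Finset.sum_ite_eq', ite_smul, smul_ite]
    split_ifs <;> simp_all
  rw [key]
  calc ν (m' + 1) _ ≤ opNorm (Matrix.single k 0 (1 : ℂ)) *
        ν (m' + 1) (scalRight (Matrix.single (0 : Fin (m' + 1)) 0 x)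
          (Matrix.single (0 : Fin (m' + 1)) l (1 : ℂ))) := hν.2.2.2.2.1 _ _ _
    _ ≤ 1 * (ν (m' + 1) (Matrix.single (0 : Fin (m' + 1)) 0 x) *
        opNorm (Matrix.single (0 : Fin (m' + 1)) l (1 : ℂ))) := by
        apply mul_le_mul (opNorm_stdBasis_le _ _) (hν.2.2.2.2.2 _ _ _)
          (nu_nonneg hν _ _) zero_le_one
    _ ≤ 1 * (ν (m' + 1) (Matrix.single (0 : Fin (m' + 1)) 0 x) * 1) := by
        apply mul_le_mul_of_nonneg_left _ zero_le_one
        exact mul_le_mul_of_nonneg_left (opNorm_stdBasis_le _ _) (nu_nonneg hν _ _)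
    _ = ν 1 (Matrix.of fun _ _ => x) := by rw [mul_one, one_mul, nu_std00 hν]

lemma nu_entry_le {n' : ℕ} (v : Matrix (Fin (n' + 1)) (Fin (n' + 1)) E)
    (i j : Fin (n' + 1)) :
    ν 1 (Matrix.of fun _ _ => v i j) ≤ ν (n' + 1) v := by
  have key : Matrix.single (0 : Fin (n' + 1)) 0 (v i j)
      = scalLeft (Matrix.single (0 : Fin (n' + 1)) i (1 : ℂ))
          (scalRight v (Matrix.single j (0 : Fin (n' + 1)) (1 : ℂ))) := by
    ext p q
    simp only [scalLeft, scalRight, Matrix.of_apply, Matrix.single, ite_and,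
      Finset.smul_sum]
    rw [Finset.sum_comm]
    simp [Finset.sum_ite_eq, Finset.sum_ite_eq', ite_smul, smul_ite]
    split_ifs <;> simp_all
  have h1 : ν (n' + 1) (Matrix.single (0 : Fin (n' + 1)) 0 (v i j))
      ≤ ν (n' + 1) v := by
    rw [key]
    calc ν (n' + 1) _ ≤ opNorm (Matrix.single (0 : Fin (n' + 1)) i (1 : ℂ)) *
          ν (n' + 1) (scalRight v (Matrix.single j (0 : Fin (n' + 1)) (1 : ℂ))) :=
        hν.2.2.2.2.1 _ _ _
      _ ≤ 1 * (ν (n' + 1) v * 1) := by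
          apply mul_le_mul (opNorm_stdBasis_le _ _) _ (nu_nonneg hν _ _) zero_le_one
          calc ν (n' + 1) (scalRight v _) ≤ ν (n' + 1) v * opNorm _ := hν.2.2.2.2.2 _ _ _
            _ ≤ ν (n' + 1) v * 1 :=
              mul_le_mul_of_nonneg_left (opNorm_stdBasis_le _ _) (nu_nonneg hν _ _)
      _ = ν (n' + 1) v := by rw [mul_one, one_mul]
  rw [← nu_std00 hν]
  exact h1

end General
section Identities
variable {E : Type} [AddCommGroup E] [Module ℂ E] {n : ℕ}

lemma matPhi_zero (v : Matrix (Fin n) (Fin n) E) : matPhi v 0 = 0 := by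
  simp [matPhi]

lemma matPhi_add (v : Matrix (Fin n) (Fin n) E) (a b : Matrix (Fin n) (Fin n) ℂ) :
    matPhi v (a + b) = matPhi v a + matPhi v b := by
  simp [matPhi, add_smul, Finset.sum_add_distrib]

lemma matPhi_smul (v : Matrix (Fin n) (Fin n) E) (c : ℂ) (a : Matrix (Fin n) (Fin n) ℂ) :
    matPhi v (c • a) = c • matPhi v a := by
  simp only [matPhi, Matrix.smul_apply, smul_eq_mul, mul_smul, Finset.smul_sum]

/-- `matPhi v` as a linear map. -/
def matPhiL (v : Matrix (Fin n) (Fin n) E) : Matrix (Fin n) (Fin n) ℂ →ₗ[ℂ] E where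
  toFun := matPhi v
  map_add' := matPhi_add v
  map_smul' := matPhi_smul v

lemma matPhi_sum {ι : Type*} (v : Matrix (Fin n) (Fin n) E) (s : Finset ι)
    (f : ι → Matrix (Fin n) (Fin n) ℂ) :
    matPhi v (∑ i ∈ s, f i) = ∑ i ∈ s, matPhi v (f i) :=
  map_sum (matPhiL v) f s

lemma matAmpl_apply {F : Type*} (φ : E → F) {m : ℕ}
    (u : Matrix (Fin m) (Fin m) E) (p q : Fin m) : matAmpl φ u p q = φ (u p q) := rfl

variable {m : ℕ} (v : Matrix (Fin n) (Fin n) E)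

lemma matAmpl_add (u w : Matrix (Fin m) (Fin m) (Matrix (Fin n) (Fin n) ℂ)) :
    matAmpl (matPhi v) (u + w) = matAmpl (matPhi v) u + matAmpl (matPhi v) w := by
  ext p q
  simp [matAmpl, matPhi_add]

lemma matAmpl_smul (c : ℂ) (u : Matrix (Fin m) (Fin m) (Matrix (Fin n) (Fin n) ℂ)) :
    matAmpl (matPhi v) (c • u) = c • matAmpl (matPhi v) u := by
  ext p q
  simp [matAmpl, matPhi_smul]

lemma matAmpl_zero : matAmpl (matPhi v) (0 : Matrix (Fin m) (Fin m) (Matrix (Fin n) (Fin n) ℂ))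
    = 0 := by
  ext p q
  simp [matAmpl, matPhi_zero]

lemma matAmpl_scalLeft (S : Matrix (Fin m) (Fin m) ℂ)
    (u : Matrix (Fin m) (Fin m) (Matrix (Fin n) (Fin n) ℂ)) :
    matAmpl (matPhi v) (scalLeft S u) = scalLeft S (matAmpl (matPhi v) u) := by
  ext p q
  simp only [matAmpl, scalLeft, Matrix.of_apply, matPhi_sum, matPhi_smul]

lemma matAmpl_scalRight (u : Matrix (Fin m) (Fin m) (Matrix (Fin n) (Fin n) ℂ))
    (S : Matrix (Fin m) (Fin m) ℂ) :
    matAmpl (matPhi v) (scalRight u S) = scalRight (matAmpl (matPhi v) u) S := by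
  ext p q
  simp only [matAmpl, scalRight, Matrix.of_apply, matPhi_sum, matPhi_smul]

lemma matAmpl_dsum {k : ℕ} (u : Matrix (Fin m) (Fin m) (Matrix (Fin n) (Fin n) ℂ)) :
    matAmpl (matPhi v) (MatDSum u (0 : Matrix (Fin k) (Fin k) (Matrix (Fin n) (Fin n) ℂ)))
      = MatDSum (matAmpl (matPhi v) u) (0 : Matrix (Fin k) (Fin k) E) := by
  ext p q
  rw [matAmpl_apply, MatDSum_apply, MatDSum_apply]
  rcases finSumFinEquiv.symm p with a | a <;> rcases finSumFinEquiv.symm q with b | b <;>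
    simp [matAmpl, matPhi_zero]

lemma matAmpl_decomp (u : Matrix (Fin m) (Fin m) (Matrix (Fin n) (Fin n) ℂ)) :
    matAmpl (matPhi v) u
      = ∑ k : Fin m, ∑ l : Fin m, ∑ i : Fin n, ∑ j : Fin n,
          ((u k l) j i) • Matrix.single k l (v i j) := by
  ext p q
  rw [matAmpl_apply]
  simp only [Matrix.sum_apply, Matrix.smul_apply, Matrix.single, Matrix.of_apply,
    smul_ite, smul_zero]
  have inner : ∀ k l : Fin m, (∑ i : Fin n, ∑ j : Fin n,
      if p = k ∧ q = l then ((u k l) j i) • v i j else (0 : E))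
      = if p = k ∧ q = l then matPhi v (u k l) else 0 := by
    intro k l
    split_ifs <;> simp [matPhi]
  simp only [inner, ite_and]
  rw [Finset.sum_comm]
  simp [Finset.sum_ite_eq, Finset.sum_ite_eq']
  rfl

end Identities

lemma nu_ampl_le {E : Type} [AddCommGroup E] [Module ℂ E]
    {ν : ∀ m : ℕ, Matrix (Fin m) (Fin m) E → ℝ} (hν : IsMatrixNorm ν)
    {n : ℕ} (hn : 0 < n) {m : ℕ} (v : Matrix (Fin n) (Fin n) E) (hv : ν n v ≤ 1)
    (u : Matrix (Fin m) (Fin m) (Matrix (Fin n) (Fin n) ℂ)) :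
    ν m (matAmpl (matPhi v) u)
      ≤ ∑ k : Fin m, ∑ l : Fin m, ∑ i : Fin n, ∑ j : Fin n, ‖(u k l) j i‖ := by
  obtain ⟨n', rfl⟩ : ∃ n', n = n' + 1 := ⟨n - 1, by omega⟩
  rw [matAmpl_decomp]
  refine le_trans (nu_sum_le hν m _ _) (Finset.sum_le_sum fun k _ => ?_)
  refine le_trans (nu_sum_le hν m _ _) (Finset.sum_le_sum fun l _ => ?_)
  refine le_trans (nu_sum_le hν m _ _) (Finset.sum_le_sum fun i _ => ?_)
  refine le_trans (nu_sum_le hν m _ _) (Finset.sum_le_sum fun j _ => ?_)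
  rw [hν.2.1 m _ _]
  have hm : 0 < m := k.pos
  obtain ⟨m', rfl⟩ : ∃ m', m = m' + 1 := ⟨m - 1, by omega⟩
  calc ‖(u k l) j i‖ * ν (m' + 1) (Matrix.single k l (v i j))
      ≤ ‖(u k l) j i‖ * 1 := by
        refine mul_le_mul_of_nonneg_left ?_ (norm_nonneg _)
        exact le_trans (nu_std_le hν k l _) (le_trans (nu_entry_le hν v i j) hv)
    _ = ‖(u k l) j i‖ := mul_one _
open scoped Pointwise

lemma frob_isMatrixNorm : IsMatrixNorm frobNu :=
  ⟨frobNu_add_le, frobNu_smul, frobNu_eq_zero, frobNu_dsum, frobNu_scalLeft, frobNu_scalRight⟩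

section SetFacts
variable {n m : ℕ}

lemma mem_hatNormSet_of_frob (v : Matrix (Fin n) (Fin n) ℂ) (hv : frobNu n v ≤ 1)
    (u : Matrix (Fin m) (Fin m) (Matrix (Fin n) (Fin n) ℂ)) :
    frobNu m (matAmpl (matPhi v) u) ∈ hatNormSet n u :=
  ⟨ℂ, inferInstance, inferInstance, frobNu, frob_isMatrixNorm, v, hv, rfl⟩

lemma zero_mem_hatNormSet (u : Matrix (Fin m) (Fin m) (Matrix (Fin n) (Fin n) ℂ)) :
    (0 : ℝ) ∈ hatNormSet n u := by
  have h0 : matAmpl (matPhi (0 : Matrix (Fin n) (Fin n) ℂ)) u = 0 := by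
    ext p q
    simp [matAmpl, matPhi]
  have : frobNu m (matAmpl (matPhi (0 : Matrix (Fin n) (Fin n) ℂ)) u) = 0 := by
    rw [h0]; exact (frobNu_eq_zero m 0).2 rfl
  exact this ▸ mem_hatNormSet_of_frob 0 (by rw [(frobNu_eq_zero n 0).2 rfl]; norm_num) u

lemma hatNormSet_nonempty (u : Matrix (Fin m) (Fin m) (Matrix (Fin n) (Fin n) ℂ)) :
    (hatNormSet n u).Nonempty := ⟨0, zero_mem_hatNormSet u⟩

lemma hatNormSet_bddAbove (hn : 0 < n) (u : Matrix (Fin m) (Fin m) (Matrix (Fin n) (Fin n) ℂ)) :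
    BddAbove (hatNormSet n u) := by
  refine ⟨∑ k : Fin m, ∑ l : Fin m, ∑ i : Fin n, ∑ j : Fin n, ‖(u k l) j i‖, ?_⟩
  rintro r ⟨E, iG, iM, ν, hν, v, hv, rfl⟩
  exact nu_ampl_le hν hn v hv u

lemma hatNorm_nonneg (hn : 0 < n) (u : Matrix (Fin m) (Fin m) (Matrix (Fin n) (Fin n) ℂ)) :
    0 ≤ hatNorm n u :=
  le_csSup (hatNormSet_bddAbove hn u) (zero_mem_hatNormSet u)

lemma hatNorm_zero (hn : 0 < n) :
    hatNorm n (0 : Matrix (Fin m) (Fin m) (Matrix (Fin n) (Fin n) ℂ)) = 0 := by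
  refine le_antisymm (csSup_le (hatNormSet_nonempty 0) ?_) (hatNorm_nonneg hn 0)
  rintro r ⟨E, iG, iM, ν, hν, v, hv, rfl⟩
  rw [matAmpl_zero, nu_zero hν]

end SetFacts

/-- **Theorem 1.** The sequence of functions `u ↦ ‖u‖_m = sup{‖(φ^v)_m(u)‖}` (supremum
over proper couples) is a matrix-norm on `M_n`: each `‖·‖_m` is a norm on `M_m(M_n)`
(in particular `‖u‖_m > 0` for `u ≠ 0`), and Axioms 1 and 2 hold. -/
theorem hatNorm_isMatrixNorm (n : ℕ) (hn : 0 < n) :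
    IsMatrixNorm (fun m (u : Matrix (Fin m) (Fin m) (Matrix (Fin n) (Fin n) ℂ)) =>
      hatNorm n u) ∧
    ∀ (m : ℕ) (u : Matrix (Fin m) (Fin m) (Matrix (Fin n) (Fin n) ℂ)),
      u ≠ 0 → 0 < hatNorm n u := by
  have pos : ∀ (m : ℕ) (u : Matrix (Fin m) (Fin m) (Matrix (Fin n) (Fin n) ℂ)),
      u ≠ 0 → 0 < hatNorm n u := by
    intro m u hu
    have hkl : ∃ k l, u k l ≠ 0 := by
      by_contra h
      push_neg at h
      exact hu (by ext k l i j; rw [h k l]; rfl)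
    obtain ⟨k, l, hkl⟩ := hkl
    have hab : ∃ a b, (u k l) a b ≠ 0 := by
      by_contra h
      push_neg at h
      exact hkl (by ext a b; rw [h a b]; rfl)
    obtain ⟨a, b, hab⟩ := hab
    set v : Matrix (Fin n) (Fin n) ℂ := Matrix.single b a 1 with hv
    have hv1 : frobNu n v ≤ 1 := by
      rw [frobNu_eq_sqrt]
      have : (∑ i : Fin n, ∑ j : Fin n, ‖v i j‖ ^ 2) = 1 := by
        simp only [hv, Matrix.single, Matrix.of_apply, ite_and]
        rw [show (∑ x : Fin n, ∑ y : Fin n,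
            ‖if b = x then if a = y then (1:ℂ) else 0 else 0‖ ^ 2)
          = ∑ x : Fin n, ∑ y : Fin n,
            (if b = x then if a = y then (1:ℝ) else 0 else 0) from by
          refine Finset.sum_congr rfl fun i _ => Finset.sum_congr rfl fun j _ => ?_
          split_ifs <;> simp]
        simp [Finset.sum_ite_eq]
      rw [this, Real.sqrt_one]
    have hentry : matAmpl (matPhi v) u k l = (u k l) a b := by
      rw [matAmpl_apply]
      simp only [matPhi, hv, Matrix.single, Matrix.of_apply, ite_and, smul_ite,
        smul_zero, smul_eq_mul, mul_one]
      simp [Finset.sum_ite_eq']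
    have hne : matAmpl (matPhi v) u ≠ 0 := by
      intro h
      rw [← hentry] at hab
      rw [h] at hab
      exact hab rfl
    have hr : 0 < frobNu m (matAmpl (matPhi v) u) := by
      rcases lt_or_eq_of_le (frobNu_nonneg m (matAmpl (matPhi v) u)) with h | h
      · exact h
      · exact absurd ((frobNu_eq_zero m _).1 h.symm) hne
    exact lt_of_lt_of_le hr (le_csSup (hatNormSet_bddAbove hn u) (mem_hatNormSet_of_frob v hv1 u))
  refine ⟨⟨?_, ?_, ?_, ?_, ?_, ?_⟩, pos⟩
  · -- triangle
    intro m u w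
    refine csSup_le (hatNormSet_nonempty _) ?_
    rintro r ⟨E, iG, iM, ν, hν, v, hv, rfl⟩
    rw [matAmpl_add]
    refine le_trans (hν.1 m _ _) (add_le_add ?_ ?_) <;>
      exact le_csSup (hatNormSet_bddAbove hn _) ⟨E, iG, iM, ν, hν, v, hv, rfl⟩
  · -- smul
    intro m c u
    rcases eq_or_ne c 0 with rfl | hc
    · simp only [zero_smul, norm_zero, zero_mul]
      exact hatNorm_zero hn
    · have hset : hatNormSet n (c • u) = ‖c‖ • hatNormSet n u := by
        ext r
        constructor
        · rintro ⟨E, iG, iM, ν, hν, v, hv, rfl⟩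
          refine ⟨ν m (matAmpl (matPhi v) u), ⟨E, iG, iM, ν, hν, v, hv, rfl⟩, ?_⟩
          show ‖c‖ • ν m (matAmpl (matPhi v) u) = ν m (matAmpl (matPhi v) (c • u))
          rw [smul_eq_mul, ← hν.2.1 m c, ← matAmpl_smul]
        · rintro ⟨t, ⟨E, iG, iM, ν, hν, v, hv, rfl⟩, rfl⟩
          refine ⟨E, iG, iM, ν, hν, v, hv, ?_⟩
          show ‖c‖ • ν m (matAmpl (matPhi v) u) = ν m (matAmpl (matPhi v) (c • u))
          rw [smul_eq_mul, ← hν.2.1 m c, ← matAmpl_smul]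
      show hatNorm n (c • u) = ‖c‖ * hatNorm n u
      rw [hatNorm, hset, Real.sSup_smul_of_nonneg (norm_nonneg c), smul_eq_mul, hatNorm]
  · -- definiteness
    intro m u
    constructor
    · intro h
      by_contra hu
      exact absurd h (ne_of_gt (pos m u hu))
    · rintro rfl
      exact hatNorm_zero hn
  · -- axiom 1
    intro m k u
    show hatNorm n _ = hatNorm n u
    have : hatNormSet n (MatDSum u (0 : Matrix (Fin k) (Fin k) (Matrix (Fin n) (Fin n) ℂ)))
        = hatNormSet n u := by
      ext r
      constructor
      · rintro ⟨E, iG, iM, ν, hν, v, hv, rfl⟩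
        exact ⟨E, iG, iM, ν, hν, v, hv, by rw [matAmpl_dsum, hν.2.2.2.1 m k]⟩
      · rintro ⟨E, iG, iM, ν, hν, v, hv, rfl⟩
        exact ⟨E, iG, iM, ν, hν, v, hv, by rw [matAmpl_dsum, hν.2.2.2.1 m k]⟩
    rw [hatNorm, this, hatNorm]
  · -- axiom 2 left
    intro m S u
    refine csSup_le (hatNormSet_nonempty _) ?_
    rintro r ⟨E, iG, iM, ν, hν, v, hv, rfl⟩
    rw [matAmpl_scalLeft]
    refine le_trans (hν.2.2.2.2.1 m S _) ?_
    exact mul_le_mul_of_nonneg_left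
      (le_csSup (hatNormSet_bddAbove hn _) ⟨E, iG, iM, ν, hν, v, hv, rfl⟩) (opNorm_nonneg S)
  · -- axiom 2 right
    intro m u S
    refine csSup_le (hatNormSet_nonempty _) ?_
    rintro r ⟨E, iG, iM, ν, hν, v, hv, rfl⟩
    rw [matAmpl_scalRight]
    refine le_trans (hν.2.2.2.2.2 m _ S) ?_
    exact mul_le_mul_of_nonneg_right
      (le_csSup (hatNormSet_bddAbove hn _) ⟨E, iG, iM, ν, hν, v, hv, rfl⟩) (opNorm_nonneg S)
end
end

section
/- Fix n ∈ ℕ. The underlying normed space of \widehat{M}_n is the trace-class space 𝕋_n: for every a ∈ M_n, the norm of a in M_1(\widehat{M}_n), namely sup{ ‖φ^v(a)‖ : (E, v) a proper couple }, equals the trace norm ‖a‖_t of a (the sum of the singular values of a). -/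
open scoped BigOperators
open Matrix

noncomputable section

open scoped ComplexOrder in
/-- The trace norm `‖a‖_t` of a complex matrix: the sum of its singular values,
i.e. the trace of `√(aᴴ a)`. -/
noncomputable def traceNorm {n : ℕ} (a : Matrix (Fin n) (Fin n) ℂ) : ℝ :=
  (((Matrix.posSemidef_conjTranspose_mul_self a).1.eigenvectorUnitary.1 *
      Matrix.diagonal (((↑) : ℝ → ℂ) ∘ (Real.sqrt ∘ (Matrix.posSemidef_conjTranspose_mul_self a).1.eigenvalues)) *
      (star (Matrix.posSemidef_conjTranspose_mul_self a).1.eigenvectorUnitary :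
        Matrix (Fin n) (Fin n) ℂ)).trace).re


/-! ### Auxiliary material -/

open scoped Matrix.Norms.L2Operator ComplexOrder

namespace HatAux

/-! #### Operator-norm lemmas -/

lemma opNorm_eq_l2 {N : ℕ} (S : Matrix (Fin N) (Fin N) ℂ) : opNorm S = ‖S‖ := rfl

lemma l2norm_le_one_of_mulVec {N : ℕ} (A : Matrix (Fin N) (Fin N) ℂ)
    (h : ∀ x : EuclideanSpace ℂ (Fin N), ‖toEuclideanLin A x‖ ≤ ‖x‖) : ‖A‖ ≤ 1 := by
  rw [Matrix.l2_opNorm_def]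
  exact ContinuousLinearMap.opNorm_le_bound _ zero_le_one fun x => by
    simpa using h x

lemma l2norm_diagonal_le_one {N : ℕ} (e : Fin N → ℂ) (he : ∀ i, ‖e i‖ ≤ 1) :
    ‖(Matrix.diagonal e : Matrix (Fin N) (Fin N) ℂ)‖ ≤ 1 := by
  apply l2norm_le_one_of_mulVec
  intro x
  rw [EuclideanSpace.norm_eq, EuclideanSpace.norm_eq]
  apply Real.sqrt_le_sqrt
  apply Finset.sum_le_sum
  intro i _
  have : (toEuclideanLin (Matrix.diagonal e) x) i = e i * x i := by
    simp [Matrix.toEuclideanLin_apply, Matrix.mulVec_diagonal]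
  rw [this, norm_mul, mul_pow]
  have h1 : ‖e i‖ ^ 2 ≤ 1 := by
    have := he i; nlinarith [norm_nonneg (e i)]
  nlinarith [norm_nonneg (x i), sq_nonneg ‖x i‖]

lemma l2norm_le_one_of_cts {N : ℕ} (A : Matrix (Fin N) (Fin N) ℂ) (e : Fin N → ℂ)
    (h : Aᴴ * A = Matrix.diagonal e) (he : ∀ i, ‖e i‖ ≤ 1) : ‖A‖ ≤ 1 := by
  have h2 : ‖A‖ * ‖A‖ = ‖Aᴴ * A‖ := (Matrix.l2_opNorm_conjTranspose_mul_self A).symm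
  rw [h] at h2
  have h3 := l2norm_diagonal_le_one e he
  nlinarith [norm_nonneg A]

lemma stdBasis_eq_diag {N : ℕ} (k : Fin N) :
    Matrix.single k k (1:ℂ) = Matrix.diagonal (Pi.single k 1) := by
  ext i j
  by_cases hij : i = j
  · subst hij
    by_cases hk : k = i <;> simp [Matrix.single, Pi.single_apply, hk, eq_comm]
  · simp only [Matrix.single, Matrix.of_apply, Matrix.diagonal_apply_ne _ hij]
    rw [if_neg]
    rintro ⟨rfl, rfl⟩; exact hij rfl

lemma l2norm_stdBasisMatrix_le_one {N : ℕ} (i j : Fin N) :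
    ‖Matrix.single i j (1:ℂ)‖ ≤ 1 := by
  have hct : (Matrix.single i j (1:ℂ))ᴴ = Matrix.single j i 1 := by
    ext p q
    simp only [Matrix.single, Matrix.conjTranspose_apply, Matrix.of_apply]
    by_cases h1 : i = q <;> by_cases h2 : j = p <;> simp [h1, h2]
  have h : (Matrix.single i j (1:ℂ))ᴴ * Matrix.single i j (1:ℂ)
      = Matrix.diagonal (Pi.single j 1) := by
    rw [hct, Matrix.single_mul_single_same, one_mul, stdBasis_eq_diag]
  refine l2norm_le_one_of_cts _ _ h fun p => ?_
  rw [Pi.single_apply]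
  split <;> simp

lemma euclid_norm_fin_one (x : EuclideanSpace ℂ (Fin 1)) : ‖x‖ = ‖x 0‖ := by
  rw [EuclideanSpace.norm_eq, Fin.sum_univ_one, Real.sqrt_sq (norm_nonneg _)]

lemma l2norm_one_by_one (M : Matrix (Fin 1) (Fin 1) ℂ) : ‖M‖ = ‖M 0 0‖ := by
  have key : ∀ x : EuclideanSpace ℂ (Fin 1), ‖toEuclideanLin M x‖ = ‖M 0 0‖ * ‖x‖ := by
    intro x
    rw [euclid_norm_fin_one, euclid_norm_fin_one]
    have h0 : (toEuclideanLin M x) 0 = M 0 0 * x 0 := by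
      simp [Matrix.toEuclideanLin_apply, Matrix.mulVec, dotProduct]
    rw [h0, norm_mul]
  apply le_antisymm
  · rw [Matrix.l2_opNorm_def]
    exact ContinuousLinearMap.opNorm_le_bound _ (norm_nonneg _) fun x => by
      simpa using (key x).le
  · have hx : ‖((WithLp.equiv 2 (Fin 1 → ℂ)).symm (fun _ => 1) : EuclideanSpace ℂ (Fin 1))‖ = 1 := by
      rw [euclid_norm_fin_one]; simp
    have := key ((WithLp.equiv 2 (Fin 1 → ℂ)).symm (fun _ => 1))
    rw [hx, mul_one] at this
    rw [← this, Matrix.l2_opNorm_def]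
    calc ‖toEuclideanLin M ((WithLp.equiv 2 (Fin 1 → ℂ)).symm fun _ => 1)‖
        ≤ _ * ‖((WithLp.equiv 2 (Fin 1 → ℂ)).symm (fun _ => 1) : EuclideanSpace ℂ (Fin 1))‖ :=
          (LinearMap.toContinuousLinearMap (toEuclideanLin M)).le_opNorm _
      _ = _ := by rw [hx, mul_one]; rfl

/-! #### Operator norm of a block-diagonal extension -/

lemma matDSum_mulVec {m k : ℕ} (u : Matrix (Fin m) (Fin m) ℂ) (y : Fin m → ℂ) (z : Fin k → ℂ) :
    (MatDSum u (0 : Matrix (Fin k) (Fin k) ℂ)) *ᵥ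
      (fun i => Sum.elim y z (finSumFinEquiv.symm i)) =
      fun i => Sum.elim (u *ᵥ y) 0 (finSumFinEquiv.symm i) := by
  funext i
  obtain ⟨i', rfl⟩ := finSumFinEquiv.surjective i
  rw [Matrix.mulVec]
  unfold dotProduct
  rw [← Equiv.sum_comp finSumFinEquiv
    (fun j => MatDSum u 0 (finSumFinEquiv i') j * Sum.elim y z (finSumFinEquiv.symm j))]
  simp only [MatDSum, Matrix.reindex_apply, Matrix.submatrix_apply, Equiv.symm_apply_apply]
  cases i' with
  | inl p =>
    simp [Fintype.sum_sum_type, Matrix.fromBlocks, Matrix.mulVec, dotProduct]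
  | inr p =>
    simp [Fintype.sum_sum_type, Matrix.fromBlocks]

lemma euclid_norm_sq_elim {m k : ℕ} (y : Fin m → ℂ) (z : Fin k → ℂ) :
    ‖((WithLp.equiv 2 (Fin (m+k) → ℂ)).symm (fun i => Sum.elim y z (finSumFinEquiv.symm i))
      : EuclideanSpace ℂ (Fin (m+k)))‖ ^ 2
    = (∑ p, ‖y p‖^2) + ∑ q, ‖z q‖^2 := by
  rw [EuclideanSpace.norm_eq, Real.sq_sqrt (by positivity)]
  rw [← Equiv.sum_comp finSumFinEquiv]
  simp [Fintype.sum_sum_type]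

lemma euclid_norm_sq {m : ℕ} (y : Fin m → ℂ) :
    ‖((WithLp.equiv 2 (Fin m → ℂ)).symm y : EuclideanSpace ℂ (Fin m))‖ ^ 2 = ∑ p, ‖y p‖^2 := by
  rw [EuclideanSpace.norm_eq, Real.sq_sqrt (by positivity)]
  rfl

private lemma le_of_sq_le_sq {a b : ℝ} (hb : 0 ≤ b) (h : a^2 ≤ b^2) (ha : 0 ≤ a) : a ≤ b := by
  nlinarith

lemma l2norm_matDSum {m k : ℕ} (u : Matrix (Fin m) (Fin m) ℂ) :
    ‖MatDSum u (0 : Matrix (Fin k) (Fin k) ℂ)‖ = ‖u‖ := by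
  apply le_antisymm
  · rw [Matrix.l2_opNorm_def]
    apply ContinuousLinearMap.opNorm_le_bound _ (norm_nonneg u)
    intro x
    show ‖(LinearMap.toContinuousLinearMap
        (toEuclideanLin (MatDSum u (0 : Matrix (Fin k) (Fin k) ℂ)))) x‖ ≤ ‖u‖ * ‖x‖
    set y : Fin m → ℂ := fun q => x (finSumFinEquiv (Sum.inl q)) with hy
    set z : Fin k → ℂ := fun q => x (finSumFinEquiv (Sum.inr q)) with hz
    have hx : x = (WithLp.equiv 2 (Fin (m+k) → ℂ)).symm
        (fun i => Sum.elim y z (finSumFinEquiv.symm i)) := by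
      ext i
      obtain ⟨i', rfl⟩ := finSumFinEquiv.surjective i
      cases i' <;> simp [hy, hz]
    have happ : (LinearMap.toContinuousLinearMap
        (toEuclideanLin (MatDSum u (0 : Matrix (Fin k) (Fin k) ℂ)))) x
        = (WithLp.equiv 2 (Fin (m+k) → ℂ)).symm
            (fun i => Sum.elim (u *ᵥ y) 0 (finSumFinEquiv.symm i)) := by
      rw [hx]
      simp only [LinearMap.coe_toContinuousLinearMap']
      rw [← matDSum_mulVec]; rfl
    rw [happ]
    have h1 : ‖((WithLp.equiv 2 (Fin (m+k) → ℂ)).symm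
        (fun i => Sum.elim (u *ᵥ y) 0 (finSumFinEquiv.symm i))
        : EuclideanSpace ℂ (Fin (m+k)))‖
        = ‖((WithLp.equiv 2 (Fin m → ℂ)).symm (u *ᵥ y) : EuclideanSpace ℂ (Fin m))‖ := by
      apply le_of_sq_le_sq (norm_nonneg _) _ (norm_nonneg _) |>.antisymm ?_
      · rw [euclid_norm_sq_elim, euclid_norm_sq]; simp
      · apply le_of_sq_le_sq (norm_nonneg _) _ (norm_nonneg _)
        rw [euclid_norm_sq_elim, euclid_norm_sq]; simp
    rw [h1]
    have h2 := Matrix.l2_opNorm_mulVec u ((WithLp.equiv 2 (Fin m → ℂ)).symm y)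
    have h3 : ‖((WithLp.equiv 2 (Fin m → ℂ)).symm y : EuclideanSpace ℂ (Fin m))‖ ≤ ‖x‖ := by
      apply le_of_sq_le_sq (norm_nonneg _) _ (norm_nonneg _)
      rw [hx, euclid_norm_sq_elim, euclid_norm_sq]
      exact le_add_of_nonneg_right (by positivity)
    calc _ ≤ ‖u‖ * ‖((WithLp.equiv 2 (Fin m → ℂ)).symm y : EuclideanSpace ℂ (Fin m))‖ := by
            simpa using h2
      _ ≤ ‖u‖ * ‖x‖ := mul_le_mul_of_nonneg_left h3 (norm_nonneg u)
  · rw [Matrix.l2_opNorm_def (A := u)]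
    apply ContinuousLinearMap.opNorm_le_bound _ (norm_nonneg _)
    intro yy
    set y : Fin m → ℂ := WithLp.equiv 2 (Fin m → ℂ) yy with hy
    set x : EuclideanSpace ℂ (Fin (m+k)) := (WithLp.equiv 2 (Fin (m+k) → ℂ)).symm
        (fun i => Sum.elim y (0 : Fin k → ℂ) (finSumFinEquiv.symm i)) with hxdef
    have hxn : ‖x‖ = ‖yy‖ := by
      apply le_of_sq_le_sq (norm_nonneg _) _ (norm_nonneg _) |>.antisymm ?_
      · rw [hxdef, euclid_norm_sq_elim]
        have : ‖yy‖^2 = ∑ p, ‖y p‖^2 := by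
          rw [EuclideanSpace.norm_eq, Real.sq_sqrt (by positivity)]; rfl
        rw [this]; simp
      · apply le_of_sq_le_sq (norm_nonneg _) _ (norm_nonneg _)
        rw [hxdef, euclid_norm_sq_elim]
        have : ‖yy‖^2 = ∑ p, ‖y p‖^2 := by
          rw [EuclideanSpace.norm_eq, Real.sq_sqrt (by positivity)]; rfl
        rw [this]; simp
    have happ : (LinearMap.toContinuousLinearMap
        (toEuclideanLin (MatDSum u (0 : Matrix (Fin k) (Fin k) ℂ)))) x
        = (WithLp.equiv 2 (Fin (m+k) → ℂ)).symm
            (fun i => Sum.elim (u *ᵥ y) 0 (finSumFinEquiv.symm i)) := by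
      rw [hxdef]
      simp only [LinearMap.coe_toContinuousLinearMap']
      rw [← matDSum_mulVec]; rfl
    have hDx := (LinearMap.toContinuousLinearMap
        (toEuclideanLin (MatDSum u (0 : Matrix (Fin k) (Fin k) ℂ)))).le_opNorm x
    rw [happ, hxn] at hDx
    have h1 : ‖((WithLp.equiv 2 (Fin (m+k) → ℂ)).symm
        (fun i => Sum.elim (u *ᵥ y) 0 (finSumFinEquiv.symm i))
        : EuclideanSpace ℂ (Fin (m+k)))‖
        = ‖((WithLp.equiv 2 (Fin m → ℂ)).symm (u *ᵥ y) : EuclideanSpace ℂ (Fin m))‖ := by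
      apply le_of_sq_le_sq (norm_nonneg _) _ (norm_nonneg _) |>.antisymm ?_
      · rw [euclid_norm_sq_elim, euclid_norm_sq]; simp
      · apply le_of_sq_le_sq (norm_nonneg _) _ (norm_nonneg _)
        rw [euclid_norm_sq_elim, euclid_norm_sq]; simp
    rw [h1] at hDx
    have hyy : (LinearMap.toContinuousLinearMap (toEuclideanLin u)) yy
        = (WithLp.equiv 2 (Fin m → ℂ)).symm (u *ᵥ y) := by
      simp only [LinearMap.coe_toContinuousLinearMap']
      rw [hy, Matrix.toEuclideanLin_apply]
      rfl
    show ‖(LinearMap.toContinuousLinearMap (toEuclideanLin u)) yy‖ ≤ _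
    rw [hyy]
    exact hDx

/-! #### Singular-value decomposition data -/

section Spectral
variable {n : ℕ} (a : Matrix (Fin n) (Fin n) ℂ)

noncomputable def hH : (aᴴ*a).IsHermitian := (Matrix.posSemidef_conjTranspose_mul_self a).1
noncomputable def mU : Matrix (Fin n) (Fin n) ℂ :=
  ((hH a).eigenvectorUnitary : Matrix (Fin n) (Fin n) ℂ)
noncomputable def lam : Fin n → ℝ := (hH a).eigenvalues
noncomputable def sv (i : Fin n) : ℝ := Real.sqrt (lam a i)
noncomputable def gv (i : Fin n) : ℝ := if lam a i = 0 then 0 else (sv a i)⁻¹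
noncomputable def mc : Matrix (Fin n) (Fin n) ℂ :=
  a * mU a * Matrix.diagonal (fun i => (gv a i : ℂ))

lemma hU2 : (mU a) * star (mU a) = 1 :=
  (Matrix.mem_unitaryGroup_iff).mp (hH a).eigenvectorUnitary.2
lemma hU1 : star (mU a) * (mU a) = 1 :=
  (Matrix.mem_unitaryGroup_iff').mp (hH a).eigenvectorUnitary.2
lemma spec : aᴴ * a = mU a * Matrix.diagonal (fun i => (lam a i : ℂ)) * star (mU a) :=
  (hH a).spectral_theorem

lemma lam_nonneg (i : Fin n) : 0 ≤ lam a i :=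
  (Matrix.posSemidef_conjTranspose_mul_self a).eigenvalues_nonneg i

lemma sv_sq (i : Fin n) : sv a i * sv a i = lam a i :=
  Real.mul_self_sqrt (lam_nonneg a i)

lemma sv_nonneg (i : Fin n) : 0 ≤ sv a i := Real.sqrt_nonneg _

lemma hb : (a * mU a)ᴴ * (a * mU a) = Matrix.diagonal (fun i => (lam a i : ℂ)) := by
  rw [Matrix.conjTranspose_mul]
  calc (mU a)ᴴ * aᴴ * (a * mU a) = (mU a)ᴴ * (aᴴ * a) * mU a := by
        simp only [Matrix.mul_assoc]
      _ = _ := by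
        rw [spec a, ← Matrix.star_eq_conjTranspose]
        calc star (mU a) * (mU a * diagonal (fun i => (lam a i : ℂ)) * star (mU a)) * mU a
            = (star (mU a) * mU a) * diagonal (fun i => (lam a i : ℂ)) * (star (mU a) * mU a) := by
              simp only [Matrix.mul_assoc]
          _ = _ := by rw [hU1, one_mul, mul_one]

lemma hbcol (k : Fin n) (hk : lam a k = 0) (j : Fin n) : (a * mU a) j k = 0 := by
  have h : ((a * mU a)ᴴ * (a * mU a)) k k = diagonal (fun i => (lam a i : ℂ)) k k := by
    rw [hb a]
  rw [Matrix.mul_apply] at h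
  simp only [Matrix.conjTranspose_apply, Matrix.diagonal_apply_eq] at h
  rw [hk] at h
  have h' : ∑ j, Complex.normSq ((a * mU a) j k) = 0 := by
    have : ∀ j : Fin n, star ((a * mU a) j k) * (a * mU a) j k
        = (Complex.normSq ((a * mU a) j k) : ℂ) := by
      intro j; rw [Complex.star_def, Complex.normSq_eq_conj_mul_self]
    rw [Finset.sum_congr rfl (fun j _ => this j)] at h
    exact_mod_cast h
  have := (Finset.sum_eq_zero_iff_of_nonneg
    (fun j _ => Complex.normSq_nonneg _)).mp h' j (Finset.mem_univ j)
  exact Complex.normSq_eq_zero.mp this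

lemma hcs : mc a * Matrix.diagonal (fun i => (sv a i : ℂ)) = a * mU a := by
  ext j k
  rw [mc, Matrix.mul_assoc, Matrix.diagonal_mul_diagonal, Matrix.mul_diagonal]
  by_cases hk : lam a k = 0
  · rw [hbcol a k hk j]
    simp [gv, hk]
  · have hs : (sv a k : ℝ) ≠ 0 := by
      simp only [sv]
      exact Real.sqrt_ne_zero'.mpr (lt_of_le_of_ne (lam_nonneg a k) (Ne.symm hk))
    simp only [gv, if_neg hk]
    rw [← Complex.ofReal_mul, inv_mul_cancel₀ hs]
    simp

lemma hc : (mc a)ᴴ * mc a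
    = Matrix.diagonal (fun k => ((if lam a k = 0 then (0:ℝ) else 1 : ℝ) : ℂ)) := by
  rw [mc, Matrix.conjTranspose_mul, Matrix.diagonal_conjTranspose]
  have hstar : (star fun i => (gv a i : ℂ)) = fun i => (gv a i : ℂ) := by
    funext i; simp [Complex.star_def, Complex.conj_ofReal]
  rw [hstar]
  calc diagonal (fun i => (gv a i : ℂ)) * (a * mU a)ᴴ * (a * mU a * diagonal fun i => (gv a i : ℂ))
      = diagonal (fun i => (gv a i : ℂ)) * ((a * mU a)ᴴ * (a * mU a)) * diagonal (fun i => (gv a i : ℂ)) := by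
        simp only [Matrix.mul_assoc]
    _ = _ := by
        rw [hb a, Matrix.diagonal_mul_diagonal, Matrix.diagonal_mul_diagonal]
        apply congrArg Matrix.diagonal
        funext k
        by_cases hk : lam a k = 0
        · simp [gv, hk]
        · have hs : sv a k ≠ 0 := by
            simp only [sv]
            exact Real.sqrt_ne_zero'.mpr (lt_of_le_of_ne (lam_nonneg a k) (Ne.symm hk))
          have hr : (sv a k)⁻¹ * lam a k * (sv a k)⁻¹ = 1 := by
            rw [← sv_sq a k]; field_simp
          simp only [gv, if_neg hk]
          push_cast
          exact_mod_cast congrArg (Complex.ofReal) hr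

lemma hA : a = mc a * Matrix.diagonal (fun i => (sv a i : ℂ)) * star (mU a) := by
  rw [hcs a, Matrix.mul_assoc, hU2 a, mul_one]

lemma traceNorm_eq : traceNorm a = ∑ k, sv a k := by
  unfold traceNorm
  rw [Matrix.trace_mul_cycle]
  rw [(Matrix.mem_unitaryGroup_iff').mp (hH a).eigenvectorUnitary.2, one_mul,
    Matrix.trace_diagonal]
  rw [Complex.re_sum]
  simp [sv, lam]

end Spectral

/-! #### Elementary consequences of the matrix-norm axioms -/

section NuBasic
variable {E : Type} [AddCommGroup E] [Module ℂ E]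
  {ν : ∀ m : ℕ, Matrix (Fin m) (Fin m) E → ℝ} (hν : IsMatrixNorm ν)

include hν

lemma nu_zero (m : ℕ) : ν m 0 = 0 := by
  have := hν.2.1 m 0 0
  simpa using this

lemma nu_neg (m : ℕ) (u : Matrix (Fin m) (Fin m) E) : ν m (-u) = ν m u := by
  have := hν.2.1 m (-1) u
  simpa using this

lemma nu_nonneg (m : ℕ) (u : Matrix (Fin m) (Fin m) E) : 0 ≤ ν m u := by
  have h1 := hν.1 m u (-u)
  rw [add_neg_cancel, nu_zero hν, nu_neg hν] at h1
  linarith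

lemma nu_sum_le {ι : Type*} (m : ℕ) (t : Finset ι) (f : ι → Matrix (Fin m) (Fin m) E) :
    ν m (∑ i ∈ t, f i) ≤ ∑ i ∈ t, ν m (f i) := by
  classical
  induction t using Finset.induction_on with
  | empty => simp [nu_zero hν]
  | insert x t hx ih =>
    rw [Finset.sum_insert hx, Finset.sum_insert hx]
    exact (hν.1 m _ _).trans (by linarith)

end NuBasic

section Extract
variable {E : Type} [AddCommGroup E] [Module ℂ E]

omit [Module ℂ E] in
lemma matDSum_single {m : ℕ} (x : E) (z : Fin (1 + m)) (hz : z.val = 0) :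
    MatDSum (Matrix.of fun _ _ : Fin 1 => x) (0 : Matrix (Fin m) (Fin m) E)
      = Matrix.of fun p q : Fin (1 + m) => if p = z ∧ q = z then x else 0 := by
  ext p q
  obtain ⟨p', rfl⟩ := finSumFinEquiv.surjective p
  obtain ⟨q', rfl⟩ := finSumFinEquiv.surjective q
  simp only [MatDSum, Matrix.reindex_apply, Matrix.submatrix_apply, Equiv.symm_apply_apply,
    Matrix.of_apply]
  cases p' with
  | inl p0 =>
    cases q' with
    | inl q0 =>
      rw [if_pos]
      · simp [Matrix.fromBlocks]
      constructor <;>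
      · rw [Fin.ext_iff]
        simp [hz, Fin.ext_iff]
    | inr q0 =>
      rw [if_neg]
      · simp [Matrix.fromBlocks]
      rintro ⟨-, hq⟩
      rw [Fin.ext_iff] at hq
      simp [hz] at hq
  | inr p0 =>
    rw [if_neg]
    · cases q' <;> simp [Matrix.fromBlocks]
    rintro ⟨hp, -⟩
    rw [Fin.ext_iff] at hp
    simp [hz] at hp

lemma key_single {m : ℕ} (w : Matrix (Fin (1+m)) (Fin (1+m)) E) (k z : Fin (1+m)) :
    scalLeft (Matrix.single z k 1) (scalRight w (Matrix.single k z 1))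
      = Matrix.of fun p q : Fin (1 + m) => if p = z ∧ q = z then w k k else 0 := by
  ext p q
  simp only [scalLeft, scalRight, Matrix.single, Matrix.of_apply, ite_smul, one_smul,
    zero_smul, ite_and]
  by_cases hp : z = p
  · subst hp
    rw [Finset.sum_eq_single k]
    · by_cases hq : z = q
      · subst hq
        simp
      · simp [hq, Ne.symm hq]
    · intro i _ hi
      simp [Ne.symm hi, hi]
    · simp
  · rw [if_neg (by tauto), Finset.sum_eq_zero]
    intro i _
    simp [hp]

lemma nu_extract {ν : ∀ m : ℕ, Matrix (Fin m) (Fin m) E → ℝ} (hν : IsMatrixNorm ν)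
    {n : ℕ} (hn : 0 < n) (w : Matrix (Fin n) (Fin n) E) (k : Fin n) :
    ν 1 (Matrix.of fun _ _ : Fin 1 => w k k) ≤ ν n w := by
  obtain ⟨m, rfl⟩ : ∃ m, n = 1 + m := ⟨n - 1, by omega⟩
  obtain ⟨z, hz⟩ : ∃ z : Fin (1+m), z.val = 0 := ⟨⟨0, by omega⟩, rfl⟩
  have h1 : ν (1+m) (MatDSum (Matrix.of fun _ _ : Fin 1 => w k k)
      (0 : Matrix (Fin m) (Fin m) E)) = ν 1 (Matrix.of fun _ _ : Fin 1 => w k k) :=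
    hν.2.2.2.1 1 m _
  rw [← h1, matDSum_single (w k k) z hz, ← key_single w k z]
  have h2 := hν.2.2.2.2.1 (1+m) (Matrix.single z k 1)
    (scalRight w (Matrix.single k z 1))
  have h3 := hν.2.2.2.2.2 (1+m) w (Matrix.single k z 1)
  have b1 : opNorm (Matrix.single z k (1:ℂ)) ≤ 1 := by
    rw [opNorm_eq_l2]; exact l2norm_stdBasisMatrix_le_one _ _
  have b2 : opNorm (Matrix.single k z (1:ℂ)) ≤ 1 := by
    rw [opNorm_eq_l2]; exact l2norm_stdBasisMatrix_le_one _ _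
  have o1 : 0 ≤ opNorm (Matrix.single z k (1:ℂ)) := norm_nonneg _
  have o2 : 0 ≤ opNorm (Matrix.single k z (1:ℂ)) := norm_nonneg _
  have n1 := nu_nonneg hν (1+m) w
  have n2 := nu_nonneg hν (1+m) (scalRight w (Matrix.single k z 1))
  nlinarith

end Extract

/-! #### The upper bound -/

lemma triple_swap {n : ℕ} {M : Type*} [AddCommMonoid M] (f : Fin n → Fin n → Fin n → M) :
    (∑ i, ∑ j, ∑ k, f i j k) = ∑ k, ∑ j, ∑ i, f i j k := by
  calc (∑ i, ∑ j, ∑ k, f i j k) = ∑ j, ∑ i, ∑ k, f i j k := Finset.sum_comm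
    _ = ∑ j, ∑ k, ∑ i, f i j k := Finset.sum_congr rfl fun j _ => Finset.sum_comm
    _ = ∑ k, ∑ j, ∑ i, f i j k := Finset.sum_comm

lemma upper {n : ℕ} (hn : 0 < n) (a : Matrix (Fin n) (Fin n) ℂ)
    {E : Type} [AddCommGroup E] [Module ℂ E]
    {ν : ∀ m : ℕ, Matrix (Fin m) (Fin m) E → ℝ} (hν : IsMatrixNorm ν)
    (v : Matrix (Fin n) (Fin n) E) (hv : ν n v ≤ 1) :
    ν 1 (matAmpl (matPhi v) (Matrix.of fun _ _ : Fin 1 => a)) ≤ traceNorm a := by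
  set w := scalRight (scalLeft (star (mU a)) v) (mc a) with hw
  have hw1 : ν n w ≤ 1 := by
    have h2 := hν.2.2.2.2.2 n (scalLeft (star (mU a)) v) (mc a)
    have h3 := hν.2.2.2.2.1 n (star (mU a)) v
    have bU : opNorm (star (mU a)) ≤ 1 := by
      rw [opNorm_eq_l2]
      apply l2norm_le_one_of_cts _ (fun _ => (1:ℂ))
      · rw [Matrix.star_eq_conjTranspose, Matrix.conjTranspose_conjTranspose,
          ← Matrix.star_eq_conjTranspose, hU2 a]
        exact Matrix.diagonal_one.symm
      · intro _; simp
    have bc : opNorm (mc a) ≤ 1 := by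
      rw [opNorm_eq_l2]
      apply l2norm_le_one_of_cts _ _ (hc a)
      intro i; by_cases h : lam a i = 0 <;> simp [h]
    have o1 : 0 ≤ opNorm (star (mU a)) := norm_nonneg _
    have o2 : 0 ≤ opNorm (mc a) := norm_nonneg _
    have n2 := nu_nonneg hν n (scalLeft (star (mU a)) v)
    have n3 := nu_nonneg hν n v
    nlinarith
  have hphi : matPhi v a = ∑ k, ((sv a k : ℂ)) • w k k := by
    rw [matPhi]
    have ha' : ∀ i j : Fin n, a j i
        = ∑ k, (mc a j k * (sv a k : ℂ)) * (star (mU a)) k i := by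
      intro i j
      conv_lhs => rw [hA a]
      rw [Matrix.mul_apply]
      apply Finset.sum_congr rfl
      intro k _
      rw [Matrix.mul_diagonal]
    have hL : (∑ i, ∑ j, a j i • v i j)
        = ∑ i, ∑ j, ∑ k, ((mc a j k * (sv a k : ℂ)) * (star (mU a)) k i) • v i j := by
      apply Finset.sum_congr rfl; intro i _
      apply Finset.sum_congr rfl; intro j _
      rw [ha' i j, Finset.sum_smul]
    have hR : (∑ k, ((sv a k : ℂ)) • w k k)
        = ∑ k, ∑ j, ∑ i, ((mc a j k * (sv a k : ℂ)) * (star (mU a)) k i) • v i j := by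
      apply Finset.sum_congr rfl; intro k _
      rw [hw]
      simp only [scalRight, scalLeft, Matrix.of_apply, Finset.smul_sum, smul_smul]
      apply Finset.sum_congr rfl; intro j _
      apply Finset.sum_congr rfl; intro i _
      congr 1
      ring
    rw [hL, hR, triple_swap]
  have hEq : matAmpl (matPhi v) (Matrix.of fun _ _ : Fin 1 => a)
      = ∑ k, ((sv a k : ℂ)) • (Matrix.of fun _ _ : Fin 1 => w k k) := by
    ext p q
    simp only [matAmpl, Matrix.of_apply, Matrix.sum_apply, Matrix.smul_apply]
    rw [hphi]
  rw [hEq, traceNorm_eq]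
  calc ν 1 (∑ k, ((sv a k : ℂ)) • (Matrix.of fun _ _ : Fin 1 => w k k))
      ≤ ∑ k, ν 1 (((sv a k : ℂ)) • (Matrix.of fun _ _ : Fin 1 => w k k)) :=
        nu_sum_le hν 1 _ _
    _ ≤ ∑ k, sv a k := by
        apply Finset.sum_le_sum
        intro k _
        rw [hν.2.1]
        have h1 : ‖((sv a k : ℝ) : ℂ)‖ = sv a k := by
          rw [Complex.norm_real]
          exact abs_of_nonneg (sv_nonneg a k)
        rw [h1]
        have h2 : ν 1 (Matrix.of fun _ _ : Fin 1 => w k k) ≤ 1 :=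
          (nu_extract hν hn w k).trans hw1
        have := nu_nonneg hν 1 (Matrix.of fun _ _ : Fin 1 => w k k)
        nlinarith [sv_nonneg a k]

/-! #### The lower bound -/

lemma lower {n : ℕ} (a : Matrix (Fin n) (Fin n) ℂ) :
    traceNorm a ∈ hatNormSet n (Matrix.of fun _ _ : Fin 1 => a) := by
  refine ⟨ℂ, inferInstance, inferInstance, fun m' u => ‖u‖, ?_, ?_⟩
  · refine ⟨fun m u v => norm_add_le u v, fun m c u => norm_smul c u,
      fun m u => norm_eq_zero, fun m k u => l2norm_matDSum u, fun m S u => ?_, fun m u S => ?_⟩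
    · have hS : scalLeft S u = S * u := by
        ext i j; simp [scalLeft, Matrix.mul_apply, smul_eq_mul]
      rw [hS, opNorm_eq_l2]
      exact Matrix.l2_opNorm_mul S u
    · have hS : scalRight u S = u * S := by
        ext i j; simp [scalRight, Matrix.mul_apply, smul_eq_mul, mul_comm]
      rw [hS, opNorm_eq_l2]
      exact Matrix.l2_opNorm_mul u S
  · refine ⟨mU a * Matrix.diagonal (fun k => ((if lam a k = 0 then (0:ℝ) else 1 : ℝ) : ℂ))
      * (mc a)ᴴ, ?_, ?_⟩
    · -- norm bound
      have h1 : ‖mU a‖ ≤ 1 := by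
        apply l2norm_le_one_of_cts _ (fun _ => (1:ℂ))
        · rw [← Matrix.star_eq_conjTranspose, hU1 a, Matrix.diagonal_one]
        · intro _; simp
      have h2 : ‖Matrix.diagonal (fun k => ((if lam a k = 0 then (0:ℝ) else 1 : ℝ) : ℂ))‖ ≤ 1 := by
        apply l2norm_diagonal_le_one
        intro i; by_cases h : lam a i = 0 <;> simp [h]
      have h3 : ‖(mc a)ᴴ‖ ≤ 1 := by
        rw [Matrix.l2_opNorm_conjTranspose]
        apply l2norm_le_one_of_cts _ _ (hc a)
        intro i; by_cases h : lam a i = 0 <;> simp [h]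
      calc ‖mU a * Matrix.diagonal (fun k => ((if lam a k = 0 then (0:ℝ) else 1 : ℝ) : ℂ)) * (mc a)ᴴ‖
          ≤ ‖mU a * Matrix.diagonal (fun k => ((if lam a k = 0 then (0:ℝ) else 1 : ℝ) : ℂ))‖ * ‖(mc a)ᴴ‖ :=
            Matrix.l2_opNorm_mul _ _
        _ ≤ ‖mU a‖ * ‖Matrix.diagonal (fun k => ((if lam a k = 0 then (0:ℝ) else 1 : ℝ) : ℂ))‖ * ‖(mc a)ᴴ‖ := by
            have := Matrix.l2_opNorm_mul (mU a)
              (Matrix.diagonal (fun k => ((if lam a k = 0 then (0:ℝ) else 1 : ℝ) : ℂ)))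
            have hn3 : (0:ℝ) ≤ ‖(mc a)ᴴ‖ := norm_nonneg _
            nlinarith [norm_nonneg (mU a * Matrix.diagonal (fun k => ((if lam a k = 0 then (0:ℝ) else 1 : ℝ) : ℂ)))]
        _ ≤ 1 := by
            have hx := norm_nonneg (mU a)
            have hy := norm_nonneg
              (Matrix.diagonal (fun k => ((if lam a k = 0 then (0:ℝ) else 1 : ℝ) : ℂ)))
            have hz := norm_nonneg ((mc a)ᴴ)
            nlinarith [mul_nonneg hx hy]
    · -- value
      set v₀ := mU a * Matrix.diagonal (fun k => ((if lam a k = 0 then (0:ℝ) else 1 : ℝ) : ℂ))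
        * (mc a)ᴴ with hv₀
      have hprod : v₀ * a = mU a * Matrix.diagonal (fun k => ((sv a k : ℝ) : ℂ)) * star (mU a) := by
        have step : v₀ * (mc a * Matrix.diagonal (fun i => (sv a i : ℂ)) * star (mU a))
            = mU a * Matrix.diagonal (fun k => ((sv a k : ℝ) : ℂ)) * star (mU a) := by
          rw [hv₀]
          calc mU a * diagonal (fun k => ((if lam a k = 0 then (0:ℝ) else 1 : ℝ) : ℂ)) * (mc a)ᴴ
                * (mc a * diagonal (fun i => (sv a i : ℂ)) * star (mU a))
              = mU a * (diagonal (fun k => ((if lam a k = 0 then (0:ℝ) else 1 : ℝ) : ℂ))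
                * ((mc a)ᴴ * mc a) * diagonal (fun i => (sv a i : ℂ))) * star (mU a) := by
                simp only [Matrix.mul_assoc]
            _ = _ := by
                rw [hc a, Matrix.diagonal_mul_diagonal, Matrix.diagonal_mul_diagonal]
                congr 2
                apply congrArg Matrix.diagonal
                funext k
                by_cases h : lam a k = 0
                · have : sv a k = 0 := by simp [sv, h]
                  simp [h, this]
                · simp [h]
        rw [← hA a] at step
        exact step
      have htr : matPhi v₀ a = (((∑ k, sv a k : ℝ)) : ℂ) := by
        rw [matPhi]
        have e1 : (∑ i, ∑ j, a j i • v₀ i j) = Matrix.trace (v₀ * a) := by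
          rw [Matrix.trace]
          simp only [Matrix.diag_apply, Matrix.mul_apply, smul_eq_mul]
          apply Finset.sum_congr rfl; intro i _
          apply Finset.sum_congr rfl; intro j _
          ring
        rw [e1, hprod, Matrix.trace_mul_cycle, hU1 a, one_mul, Matrix.trace_diagonal]
        push_cast
        rfl
      show traceNorm a = ‖matAmpl (matPhi v₀) (Matrix.of fun _ _ : Fin 1 => a)‖
      have : matAmpl (matPhi v₀) (Matrix.of fun _ _ : Fin 1 => a)
          = Matrix.of fun _ _ : Fin 1 => matPhi v₀ a := rfl
      rw [this, l2norm_one_by_one, Matrix.of_apply, htr, Complex.norm_real,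
        Real.norm_eq_abs, abs_of_nonneg (Finset.sum_nonneg fun k _ => sv_nonneg a k),
        traceNorm_eq]

end HatAux

/-- **Theorem 6.** The underlying normed space of `M̂_n` is `𝕋_n`: for every `a ∈ M_n`,
the norm of `a` in `M_1(M̂_n)` equals the trace norm `‖a‖_t`. -/
theorem hatNorm_one_eq_traceNorm (n : ℕ) (hn : 0 < n)
    (a : Matrix (Fin n) (Fin n) ℂ) :
    hatNorm n (Matrix.of fun _ _ : Fin 1 => a) = traceNorm a := by
  apply IsGreatest.csSup_eq
  constructor
  · exact HatAux.lower a
  · rintro r ⟨E, _inst1, _inst2, ν, hν, v, hv, rfl⟩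
    exact HatAux.upper hn a hν v hv
end
end
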